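/- Let α and β be real numbers and let n be a nonnegative integer. For every real x > 1, the n-th derivative of the function f(x) = x^{-α}·(ln x)^{β} (real powers) satisfies f^{(n)}(x) = x^{-α-n} · Σ_{i=0}^{n} s(n,i,α)·(β)_i·(ln x)^{β-i}. -/

import Mathlib

/-- Non-central Stirling numbers of the first kind `s(n, k, α)`. -/
noncomputable def ncStirling : ℕ → ℕ → ℝ → ℝ
  | 0, 0, _ => 1
  | 0, _ + 1, _ => 0
  | n + 1, 0, α => (-α - n) * ncStirling n 0 α
  | n + 1, k + 1, α => ncStirling n k α + (-α - n) * ncStirling n (k + 1) α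

/-- Falling factorial `(β)_i = β (β-1) ⋯ (β-i+1)`, with `(β)_0 = 1`. -/
noncomputable def fall (β : ℝ) (i : ℕ) : ℝ := ∏ j ∈ Finset.range i, (β - j)

lemma ncStirling_eq_zero (α : ℝ) : ∀ n k : ℕ, n < k → ncStirling n k α = 0 := by
  intro n
  induction n with
  | zero =>
    intro k hk
    match k, hk with
    | k + 1, _ => rfl
  | succ n ih =>
    intro k hk
    match k, hk with
    | k + 1, hk =>
      have h1 : n < k := by omega
      have h2 : n < k + 1 := by omega
      show ncStirling n k α + (-α - n) * ncStirling n (k + 1) α = 0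
      rw [ih k h1, ih (k + 1) h2]; ring

lemma fall_succ (β : ℝ) (i : ℕ) : fall β (i + 1) = fall β i * (β - i) :=
  Finset.prod_range_succ _ _

lemma sum_step (α β L : ℝ) (n : ℕ) :
    (-α - n) * (∑ i ∈ Finset.range (n + 1),
        ncStirling n i α * fall β i * L ^ (β - i))
      + ∑ i ∈ Finset.range (n + 1),
        ncStirling n i α * fall β i * ((β - i) * L ^ (β - i - 1))
    = ∑ j ∈ Finset.range (n + 2),
        ncStirling (n + 1) j α * fall β j * L ^ (β - j) := by
  rw [Finset.sum_range_succ' (fun j => ncStirling (n + 1) j α * fall β j * L ^ (β - (j : ℕ))) (n + 1)]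
  have hrec : ∀ i : ℕ, ncStirling (n + 1) (i + 1) α
      = ncStirling n i α + (-α - n) * ncStirling n (i + 1) α := fun i => rfl
  have h0 : ncStirling (n + 1) 0 α = (-α - n) * ncStirling n 0 α := rfl
  simp only [hrec, h0]
  have hsplit : ∑ i ∈ Finset.range (n + 1),
      (ncStirling n i α + (-α - n) * ncStirling n (i + 1) α) * fall β (i + 1) * L ^ (β - (i + 1 : ℕ))
      = (∑ i ∈ Finset.range (n + 1), ncStirling n i α * fall β (i + 1) * L ^ (β - (i + 1 : ℕ)))
        + (-α - n) * ∑ i ∈ Finset.range (n + 1),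
            ncStirling n (i + 1) α * fall β (i + 1) * L ^ (β - (i + 1 : ℕ)) := by
    rw [Finset.mul_sum, ← Finset.sum_add_distrib]
    exact Finset.sum_congr rfl fun i _ => by ring
  rw [hsplit]
  have hA : ∑ i ∈ Finset.range (n + 1), ncStirling n i α * fall β (i + 1) * L ^ (β - (i + 1 : ℕ))
      = ∑ i ∈ Finset.range (n + 1), ncStirling n i α * fall β i * ((β - i) * L ^ (β - i - 1)) := by
    refine Finset.sum_congr rfl fun i _ => ?_
    rw [fall_succ]
    have : (β - (i + 1 : ℕ) : ℝ) = β - i - 1 := by push_cast; ring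
    rw [this]; ring
  have hB : (∑ i ∈ Finset.range (n + 1),
        ncStirling n (i + 1) α * fall β (i + 1) * L ^ (β - (i + 1 : ℕ)))
      + ncStirling n 0 α * fall β 0 * L ^ (β - (0 : ℕ))
      = ∑ i ∈ Finset.range (n + 1), ncStirling n i α * fall β i * L ^ (β - i) := by
    rw [← Finset.sum_range_succ' (fun j => ncStirling n j α * fall β j * L ^ (β - (j : ℕ))) (n + 1),
      Finset.sum_range_succ]
    rw [ncStirling_eq_zero α n (n + 1) (by omega)]
    ring
  rw [hA, ← hB]
  push_cast
  ring

theorem deriv_rpow_mul_log_rpow (α β : ℝ) (n : ℕ) :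
    ∀ x : ℝ, 1 < x →
      iteratedDeriv n (fun y : ℝ => y ^ (-α) * Real.log y ^ β) x =
        x ^ (-α - n) * ∑ i ∈ Finset.range (n + 1),
          ncStirling n i α * fall β i * Real.log x ^ (β - i) := by
  induction n with
  | zero =>
    intro x hx
    simp [iteratedDeriv_zero, fall, ncStirling]
  | succ n ih =>
    intro x hx
    have hx0 : (0 : ℝ) < x := by linarith
    have hlog : 0 < Real.log x := Real.log_pos hx
    rw [iteratedDeriv_succ]
    have heq : iteratedDeriv n (fun y : ℝ => y ^ (-α) * Real.log y ^ β)
        =ᶠ[nhds x] fun y => y ^ (-α - n) * ∑ i ∈ Finset.range (n + 1),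
          ncStirling n i α * fall β i * Real.log y ^ (β - i) := by
      filter_upwards [eventually_gt_nhds hx] with y hy
      exact ih y hy
    rw [heq.deriv_eq]
    have h1 : HasDerivAt (fun y : ℝ => y ^ (-α - n))
        ((-α - n) * x ^ (-α - n - 1)) x :=
      Real.hasDerivAt_rpow_const (Or.inl hx0.ne')
    have h2 : ∀ i ∈ Finset.range (n + 1),
        HasDerivAt (fun y : ℝ => ncStirling n i α * fall β i * Real.log y ^ (β - i))
          (ncStirling n i α * fall β i * (x⁻¹ * (β - i) * Real.log x ^ (β - i - 1))) x := by
      intro i _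
      exact ((Real.hasDerivAt_log hx0.ne').rpow_const (Or.inl hlog.ne')).const_mul _
    have hsum := HasDerivAt.fun_sum h2
    have hD := h1.fun_mul hsum
    rw [hD.deriv]
    have hxi : x ^ (-α - n) * x⁻¹ = x ^ (-α - n - 1) := by
      rw [show -α - (n : ℝ) - 1 = (-α - n) + (-1) by ring, Real.rpow_add hx0,
        Real.rpow_neg_one]
    have hcast : (-α - (n + 1 : ℕ) : ℝ) = -α - n - 1 := by push_cast; ring
    rw [hcast]
    have hpull : x ^ (-α - (n : ℝ)) * ∑ i ∈ Finset.range (n + 1),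
          ncStirling n i α * fall β i * (x⁻¹ * (β - i) * Real.log x ^ (β - i - 1))
        = x ^ (-α - (n : ℝ) - 1) * ∑ i ∈ Finset.range (n + 1),
          ncStirling n i α * fall β i * ((β - i) * Real.log x ^ (β - i - 1)) := by
      rw [Finset.mul_sum, Finset.mul_sum]
      refine Finset.sum_congr rfl fun i _ => ?_
      rw [← hxi]; ring
    rw [hpull, ← sum_step α β (Real.log x) n]
    ring
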